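/- Let C ∈ ℝ^{p×m} and let U = {u ∈ ℝ^m : Cu ≤ 0 componentwise}. Then the polar cone of U equals the finitely generated cone {Cᵀλ : λ ∈ ℝ^p, λ ≥ 0 componentwise}; in particular this finitely generated cone is closed. -/

import Mathlib

open Matrix
open scoped RealInnerProductSpace

/-- Identify a plain vector of `ℝ^m` with a point of Euclidean space. -/
noncomputable def toE {m : ℕ} (v : Fin m → ℝ) : EuclideanSpace ℝ (Fin m) := WithLp.toLp 2 v

variable {E : Type*} [NormedAddCommGroup E] [NormedSpace ℝ E]

theorem cone_caratheodory {n : ℕ} (v : Fin n → E) :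
    ∀ (l : Fin n → ℝ), (∀ j, 0 ≤ l j) →
    ∃ (s : Finset (Fin n)) (μ : Fin n → ℝ), (∀ j, 0 ≤ μ j) ∧ (∀ j ∉ s, μ j = 0) ∧
      LinearIndependent ℝ (fun j : s => v j) ∧ ∑ j, μ j • v j = ∑ j, l j • v j := by
  suffices H : ∀ (N : ℕ) (l : Fin n → ℝ), (∀ j, 0 ≤ l j) →
      (Finset.univ.filter (fun j => l j ≠ 0)).card = N →
      ∃ (s : Finset (Fin n)) (μ : Fin n → ℝ), (∀ j, 0 ≤ μ j) ∧ (∀ j ∉ s, μ j = 0) ∧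
        LinearIndependent ℝ (fun j : s => v j) ∧ ∑ j, μ j • v j = ∑ j, l j • v j by
    intro l hl
    exact H _ l hl rfl
  intro N
  induction N using Nat.strong_induction_on with
  | _ N ih =>
  intro l hl hcard
  set s := Finset.univ.filter (fun j => l j ≠ 0) with hs
  have hmem : ∀ j ∉ s, l j = 0 := by
    intro j hj
    by_contra h
    exact hj (Finset.mem_filter.mpr ⟨Finset.mem_univ _, h⟩)
  by_cases hind : LinearIndependent ℝ (fun j : s => v j)
  · exact ⟨s, l, hl, hmem, hind, rfl⟩
  -- extract a vanishing combination with a positive coefficient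
  obtain ⟨g, hg0, i0, hi0⟩ := Fintype.not_linearIndependent_iff.mp hind
  have hsum : ∀ (a : Fin n → ℝ), (∀ j ∉ s, a j = 0) →
      ∑ j, a j • v j = ∑ j ∈ s, a j • v j := by
    intro a ha
    refine (Finset.sum_subset s.subset_univ ?_).symm
    intro j _ hj
    simp [ha j hj]
  have : ∃ w : Fin n → ℝ, (∀ j ∉ s, w j = 0) ∧ (∑ j, w j • v j = 0) ∧ ∃ j, 0 < w j := by
    set g' : Fin n → ℝ := fun j => if h : j ∈ s then g ⟨j, h⟩ else 0 with hg'
    have hg'out : ∀ j ∉ s, g' j = 0 := by intro j hj; simp [hg', hj]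
    have hg'sum : ∑ j, g' j • v j = 0 := by
      rw [hsum g' hg'out, ← Finset.sum_attach s (fun j => g' j • v j)]
      simpa [hg'] using hg0
    by_cases hpos : ∃ j, 0 < g' j
    · exact ⟨g', hg'out, hg'sum, hpos⟩
    · push_neg at hpos
      have hnegsum : ∑ j, (-g') j • v j = 0 := by
        simp only [Pi.neg_apply, neg_smul, Finset.sum_neg_distrib, hg'sum, neg_zero]
      refine ⟨-g', fun j hj => by simp [hg'out j hj], hnegsum, ⟨i0, ?_⟩⟩
      have h1 : g' i0 ≤ 0 := hpos i0
      have h2 : g' (i0 : Fin n) = g i0 := by simp [hg']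
      have hne : g' i0 ≠ 0 := by rw [h2]; exact hi0
      simpa using lt_of_le_of_ne h1 hne
  obtain ⟨w, hw0, hwsum, j1, hj1⟩ := this
  have hj1s : (j1 : Fin n) ∈ s := by
    by_contra h; rw [hw0 j1 h] at hj1; exact lt_irrefl 0 hj1
  set T := s.filter (fun j => 0 < w j) with hT
  have hTne : T.Nonempty := ⟨j1, Finset.mem_filter.mpr ⟨hj1s, hj1⟩⟩
  obtain ⟨j0, hj0T, hj0min⟩ := T.exists_mem_eq_inf' hTne (fun j => l j / w j)
  set t := T.inf' hTne (fun j => l j / w j) with htdef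
  have hj0s : j0 ∈ s := (Finset.mem_filter.mp hj0T).1
  have hwj0 : 0 < w j0 := (Finset.mem_filter.mp hj0T).2
  have ht0 : 0 ≤ t := by
    rw [hj0min]
    exact div_nonneg (hl j0) hwj0.le
  set l' : Fin n → ℝ := fun j => l j - t * w j with hl'def
  have hl' : ∀ j, 0 ≤ l' j := by
    intro j
    by_cases hwj : 0 < w j
    · have hjT : j ∈ T := Finset.mem_filter.mpr ⟨by
        by_contra h; rw [hw0 j h] at hwj; exact lt_irrefl 0 hwj, hwj⟩
      have := Finset.inf'_le (fun j => l j / w j) hjT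
      rw [← htdef] at this
      have : t * w j ≤ l j := (le_div_iff₀ hwj).mp this
      simpa [hl'def] using sub_nonneg.mpr this
    · push_neg at hwj
      have : t * w j ≤ 0 := mul_nonpos_of_nonneg_of_nonpos ht0 hwj
      have := sub_nonneg.mpr (this.trans (hl j))
      simpa [hl'def] using sub_nonneg.mpr ((mul_nonpos_of_nonneg_of_nonpos ht0 hwj).trans (hl j))
  have hl'j0 : l' j0 = 0 := by
    simp only [hl'def, hj0min]
    field_simp
    ring
  have hl'out : ∀ j ∉ s, l' j = 0 := by
    intro j hj
    simp [hl'def, hmem j hj, hw0 j hj]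
  have hsub : Finset.univ.filter (fun j => l' j ≠ 0) ⊆ s.erase j0 := by
    intro j hj
    rw [Finset.mem_filter] at hj
    refine Finset.mem_erase.mpr ⟨?_, ?_⟩
    · rintro rfl; exact hj.2 hl'j0
    · by_contra h; exact hj.2 (hl'out j h)
  have hlt : (Finset.univ.filter (fun j => l' j ≠ 0)).card < N := by
    calc (Finset.univ.filter (fun j => l' j ≠ 0)).card
        ≤ (s.erase j0).card := Finset.card_le_card hsub
      _ < s.card := Finset.card_erase_lt_of_mem hj0s
      _ = N := hcard
  obtain ⟨s', μ, hμ0, hμout, hμind, hμsum⟩ := ih _ hlt l' hl' rfl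
  refine ⟨s', μ, hμ0, hμout, hμind, ?_⟩
  rw [hμsum]
  have : ∑ j, l' j • v j = ∑ j, l j • v j - t • ∑ j, w j • v j := by
    simp [hl'def, sub_smul, Finset.sum_sub_distrib, mul_smul, Finset.smul_sum]
  rw [this, hwsum, smul_zero, sub_zero]

theorem isClosed_fg_cone [FiniteDimensional ℝ E] {n : ℕ} (v : Fin n → E) :
    IsClosed {y : E | ∃ l : Fin n → ℝ, (∀ j, 0 ≤ l j) ∧ y = ∑ j, l j • v j} := by
  have key : {y : E | ∃ l : Fin n → ℝ, (∀ j, 0 ≤ l j) ∧ y = ∑ j, l j • v j}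
      = ⋃ (s : {s : Finset (Fin n) // LinearIndependent ℝ (fun j : s => v j)}),
        {y : E | ∃ l : Fin n → ℝ, (∀ j, 0 ≤ l j) ∧ (∀ j ∉ s.1, l j = 0) ∧
          y = ∑ j, l j • v j} := by
    ext y
    simp only [Set.mem_setOf_eq, Set.mem_iUnion]
    constructor
    · rintro ⟨l, hl, rfl⟩
      obtain ⟨s, μ, hμ0, hμout, hμind, hμsum⟩ := cone_caratheodory v l hl
      exact ⟨⟨s, hμind⟩, μ, hμ0, hμout, hμsum.symm⟩
    · rintro ⟨s, l, hl, _, rfl⟩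
      exact ⟨l, hl, rfl⟩
  rw [key]
  refine isClosed_iUnion_of_finite fun s => ?_
  obtain ⟨s, hs⟩ := s
  -- the cone over an independent family is the image of the closed orthant
  -- under a closed embedding
  set T : (↥s → ℝ) →ₗ[ℝ] E := Fintype.linearCombination ℝ (fun j : s => v j) with hT
  have hTapp : ∀ μ, T μ = ∑ i : ↥s, μ i • v i := fun μ => rfl
  have hker : LinearMap.ker T = ⊥ := by
    rw [LinearMap.ker_eq_bot']
    intro μ hμ
    rw [hTapp] at hμ
    exact funext (Fintype.linearIndependent_iff.mp hs μ hμ)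
  have hclosed := LinearMap.isClosedEmbedding_of_injective hker
  have horth : IsClosed {μ : ↥s → ℝ | ∀ i, 0 ≤ μ i} := by
    have : {μ : ↥s → ℝ | ∀ i, 0 ≤ μ i} = ⋂ i, {μ | 0 ≤ μ i} := by ext; simp [Set.mem_iInter]
    rw [this]
    exact isClosed_iInter fun i => isClosed_le continuous_const (continuous_apply i)
  have himg : {y : E | ∃ l : Fin n → ℝ, (∀ j, 0 ≤ l j) ∧ (∀ j ∉ s, l j = 0) ∧
      y = ∑ j, l j • v j} = T '' {μ : ↥s → ℝ | ∀ i, 0 ≤ μ i} := by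
    ext y
    simp only [Set.mem_setOf_eq, Set.mem_image]
    constructor
    · rintro ⟨l, hl, hlout, rfl⟩
      refine ⟨fun i => l i, fun i => hl i, ?_⟩
      rw [hTapp, Finset.sum_coe_sort s (fun j => l j • v j)]
      exact Finset.sum_subset s.subset_univ (fun j _ hj => by simp [hlout j hj])
    · rintro ⟨μ, hμ, rfl⟩
      classical
      refine ⟨fun j => if h : j ∈ s then μ ⟨j, h⟩ else 0, fun j => ?_, fun j hj => by simp [hj], ?_⟩
      · by_cases h : j ∈ s <;> simp [h, hμ]
      · have h1 : ∑ j : Fin n, (if h : j ∈ s then μ ⟨j, h⟩ else 0) • v j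
            = ∑ j ∈ s, (if h : j ∈ s then μ ⟨j, h⟩ else 0) • v j :=
          (Finset.sum_subset s.subset_univ (fun j _ hj => by simp [hj])).symm
        have h2 : ∑ j ∈ s, (if h : j ∈ s then μ ⟨j, h⟩ else 0) • v j
            = ∑ i : ↥s, (if h : (i : Fin n) ∈ s then μ ⟨i, h⟩ else 0) • v (i : Fin n) :=
          (Finset.sum_coe_sort s _).symm
        rw [hTapp, h1, h2]
        exact Finset.sum_congr rfl fun i _ => by simp
  rw [himg]
  exact hclosed.isClosedMap _ horth

/-- **Polar of a polyhedral cone (Farkas).** For `U = {u : Cu ≤ 0}`, the polar cone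
`{y : ⟪y, u⟫ ≤ 0 ∀ u ∈ U}` equals the finitely generated cone `{Cᵀλ : λ ≥ 0}`; in
particular the latter is closed. -/
theorem polar_polyhedral_cone_eq_finitely_generated {p m : ℕ}
    (C : Matrix (Fin p) (Fin m) ℝ) :
    {y : EuclideanSpace ℝ (Fin m) |
        ∀ u : EuclideanSpace ℝ (Fin m), (∀ j, C.mulVec u j ≤ 0) → ⟪y, u⟫ ≤ 0}
      = {y : EuclideanSpace ℝ (Fin m) | ∃ l : Fin p → ℝ, (∀ j, 0 ≤ l j) ∧ y = toE (Cᵀ.mulVec l)} ∧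
    IsClosed {y : EuclideanSpace ℝ (Fin m) | ∃ l : Fin p → ℝ, (∀ j, 0 ≤ l j) ∧ y = toE (Cᵀ.mulVec l)} := by
  classical
  set v : Fin p → EuclideanSpace ℝ (Fin m) := fun j => toE (C j) with hv
  have hbridge : ∀ l : Fin p → ℝ, toE (Cᵀ.mulVec l) = ∑ j, l j • v j := by
    intro l
    ext i
    have h1 : (∑ j, l j • v j) i = ∑ j, l j * C j i := by
      rw [WithLp.ofLp_sum, Finset.sum_apply]
      exact Finset.sum_congr rfl fun j _ => rfl
    rw [h1]
    simp [toE, Matrix.mulVec, dotProduct, Matrix.transpose_apply, mul_comm]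
  have hCu : ∀ (u : EuclideanSpace ℝ (Fin m)) j, ⟪v j, u⟫ = C.mulVec u j := by
    intro u j
    simp [hv, toE, PiLp.inner_apply, RCLike.inner_apply, conj_trivial,
      Matrix.mulVec, dotProduct, mul_comm]
  set K := {y : EuclideanSpace ℝ (Fin m) | ∃ l : Fin p → ℝ, (∀ j, 0 ≤ l j) ∧
    y = toE (Cᵀ.mulVec l)} with hK
  have hKalt : K = {y : EuclideanSpace ℝ (Fin m) | ∃ l : Fin p → ℝ, (∀ j, 0 ≤ l j) ∧
      y = ∑ j, l j • v j} := by
    ext y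
    simp only [hK, Set.mem_setOf_eq]
    constructor
    · rintro ⟨l, hl, rfl⟩; exact ⟨l, hl, hbridge l⟩
    · rintro ⟨l, hl, rfl⟩; exact ⟨l, hl, (hbridge l).symm⟩
  have hclosed : IsClosed K := by rw [hKalt]; exact isClosed_fg_cone v
  refine ⟨?_, hclosed⟩
  ext y
  simp only [Set.mem_setOf_eq]
  constructor
  · intro hy
    by_contra hyK
    set Kc : ConvexCone ℝ (EuclideanSpace ℝ (Fin m)) :=
      { carrier := K
        smul_mem' := by
          rintro c hc x hx
          rw [hKalt] at hx ⊢
          obtain ⟨l, hl, rfl⟩ := hx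
          exact ⟨fun j => c * l j, fun j => mul_nonneg hc.le (hl j), by
            simp only [Finset.smul_sum, smul_smul]⟩
        add_mem' := by
          rintro x hx z hz
          rw [hKalt] at hx hz ⊢
          obtain ⟨l, hl, rfl⟩ := hx
          obtain ⟨l', hl', rfl⟩ := hz
          exact ⟨fun j => l j + l' j, fun j => add_nonneg (hl j) (hl' j), by
            simp only [add_smul, Finset.sum_add_distrib]⟩ } with hKc
    have hne : (Kc : Set (EuclideanSpace ℝ (Fin m))).Nonempty := by
      refine ⟨0, ?_⟩
      show (0 : EuclideanSpace ℝ (Fin m)) ∈ K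
      rw [hKalt]
      exact ⟨0, fun j => le_refl 0, by simp⟩
    obtain ⟨z, hz1, hz2⟩ : ∃ z, (∀ x ∈ Kc, 0 ≤ ⟪x, z⟫) ∧ ⟪z, y⟫ < 0 := by
      obtain ⟨z, h1, h2⟩ := ProperCone.hyperplane_separation' (x₀ := y)
        (⟨Kc.toPointedCone (by
          show (0 : EuclideanSpace ℝ (Fin m)) ∈ K
          rw [hKalt]
          exact ⟨0, fun j => le_refl 0, by simp⟩), hclosed⟩ : ProperCone ℝ _) hyK
      exact ⟨z, fun x hx => h1 x hx, by rwa [real_inner_comm]⟩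
    have hCz : ∀ j, 0 ≤ C.mulVec z j := by
      intro j
      have hvK : v j ∈ Kc := by
        show v j ∈ K
        rw [hKalt]
        refine ⟨Pi.single j 1, fun i => by
          by_cases h : i = j <;> simp [Pi.single_apply, h], ?_⟩
        simp [Pi.single_apply, ite_smul]
      have := hz1 (v j) hvK
      rwa [hCu] at this
    have hCnz : ∀ j, C.mulVec (-z) j ≤ 0 := by
      intro j
      rw [show C.mulVec (-z) = -C.mulVec z by rw [Matrix.mulVec_neg]]
      simpa using hCz j
    have := hy (-z) hCnz
    rw [inner_neg_right] at this
    have h0 : 0 ≤ ⟪y, z⟫ := by linarith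
    rw [real_inner_comm] at hz2
    linarith
  · rintro ⟨l, hl, rfl⟩ u hu
    rw [hbridge]
    rw [sum_inner]
    apply Finset.sum_nonpos
    intro j _
    rw [real_inner_smul_left, hCu]
    exact mul_nonpos_of_nonneg_of_nonpos (hl j) (hu j)
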